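/- Let α_t, β_t > 0 with Σ_t α_t = Σ_t β_t = 1 and γ_t = β_t/α_t, θ ∈ (0,1), and define Υ_market(η₁) = 1 + θ²(Σ_t β_t²/α_t − 1) + η₁ Σ_t α_t (1 − θ(1−γ_t))²(1−γ_t)/(1+η₁γ_t) for η₁ ≥ 0. Then Υ_market(θ/(1−θ)) = 1 and lim_{η₁→∞} Υ_market(η₁) = 1 + (1−θ)² (Σ_{t=1}^T α_t²/β_t − 1). -/

import Mathlib

open Finset Filter Topology

/-- For the market-portfolio cost ratio
`Υ(η₁) = 1 + θ²(Σ β²/α − 1) + η₁ Σ α_t (1−θ(1−γ_t))²(1−γ_t)/(1+η₁γ_t)`,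
one has `Υ(θ/(1−θ)) = 1` and `Υ(η₁) → 1 + (1−θ)²(Σ α²/β − 1)` as `η₁ → ∞`. -/
theorem stmt17 {T : ℕ}
    (α β : Fin T → ℝ) (hα : ∀ t, 0 < α t) (hβ : ∀ t, 0 < β t)
    (hαsum : ∑ t, α t = 1) (hβsum : ∑ t, β t = 1)
    (γ : Fin T → ℝ) (hγ : ∀ t, γ t = β t / α t)
    (θ : ℝ) (hθ : θ ∈ Set.Ioo (0 : ℝ) 1)
    (Υ : ℝ → ℝ)
    (hΥ : ∀ η₁ : ℝ, Υ η₁ =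
      1 + θ ^ 2 * ((∑ t, (β t) ^ 2 / α t) - 1) +
        η₁ * ∑ t, α t * (1 - θ * (1 - γ t)) ^ 2 * (1 - γ t) / (1 + η₁ * γ t)) :
    Υ (θ / (1 - θ)) = 1 ∧
    Tendsto Υ atTop (𝓝 (1 + (1 - θ) ^ 2 * ((∑ t, (α t) ^ 2 / β t) - 1))) := by
  obtain ⟨hθ0, hθ1⟩ := hθ
  have h1θ : (0:ℝ) < 1 - θ := by linarith
  have h1θ' : (1:ℝ) - θ ≠ 0 := ne_of_gt h1θ
  have hγpos : ∀ t, 0 < γ t := fun t => by rw [hγ]; exact div_pos (hβ t) (hα t)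
  have hγne : ∀ t, γ t ≠ 0 := fun t => ne_of_gt (hγpos t)
  have hαne : ∀ t, α t ≠ 0 := fun t => ne_of_gt (hα t)
  have hβne : ∀ t, β t ≠ 0 := fun t => ne_of_gt (hβ t)
  -- key sum identities
  have hA : ∑ t, α t * (1 - γ t) = 0 := by
    have : ∀ t ∈ univ, α t * (1 - γ t) = α t - β t := fun t _ => by
      rw [hγ]; field_simp [hαne t]
    rw [Finset.sum_congr rfl this, Finset.sum_sub_distrib, hαsum, hβsum]; ring
  have hB : ∑ t, α t * γ t * (1 - γ t) = 1 - ∑ t, (β t) ^ 2 / α t := by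
    have : ∀ t ∈ univ, α t * γ t * (1 - γ t) = β t - (β t) ^ 2 / α t := fun t _ => by
      rw [hγ]; field_simp [hαne t]
    rw [Finset.sum_congr rfl this, Finset.sum_sub_distrib, hβsum]
  have hC : ∑ t, α t * (1 - γ t) / γ t = (∑ t, (α t) ^ 2 / β t) - 1 := by
    have : ∀ t ∈ univ, α t * (1 - γ t) / γ t = (α t) ^ 2 / β t - α t := fun t _ => by
      rw [hγ]; field_simp [hαne t, hβne t]
    rw [Finset.sum_congr rfl this, Finset.sum_sub_distrib, hαsum]
  constructor
  · -- part 1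
    have key : ∀ t ∈ univ,
        (θ / (1 - θ)) * (α t * (1 - θ * (1 - γ t)) ^ 2 * (1 - γ t) / (1 + (θ / (1 - θ)) * γ t))
        = θ * (1 - θ) * (α t * (1 - γ t)) + θ ^ 2 * (α t * γ t * (1 - γ t)) := by
      intro t _
      have hd : (0:ℝ) < 1 - θ + θ * γ t := by
        have := mul_pos hθ0 (hγpos t); linarith
      have h2 : 1 + (θ / (1 - θ)) * γ t ≠ 0 := by
        have : 1 + (θ / (1 - θ)) * γ t = (1 - θ + θ * γ t) / (1 - θ) := by
          field_simp
        rw [this]; exact ne_of_gt (div_pos hd h1θ)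
      field_simp
      ring
    rw [hΥ, Finset.mul_sum, Finset.sum_congr rfl key, Finset.sum_add_distrib,
      ← Finset.mul_sum, ← Finset.mul_sum, hA, hB]
    ring
  · -- part 2
    have hlim : (1:ℝ) + (1 - θ) ^ 2 * ((∑ t, (α t) ^ 2 / β t) - 1)
        = (1 + θ ^ 2 * ((∑ t, (β t) ^ 2 / α t) - 1))
          + ∑ t, (α t * (1 - θ * (1 - γ t)) ^ 2 * (1 - γ t)) / γ t := by
      have key : ∀ t ∈ univ,
          (α t * (1 - θ * (1 - γ t)) ^ 2 * (1 - γ t)) / γ t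
          = (1 - θ) ^ 2 * (α t * (1 - γ t) / γ t)
            + 2 * θ * (1 - θ) * (α t * (1 - γ t)) + θ ^ 2 * (α t * γ t * (1 - γ t)) := by
        intro t _
        field_simp [hγne t]
        ring
      rw [Finset.sum_congr rfl key, Finset.sum_add_distrib, Finset.sum_add_distrib,
        ← Finset.mul_sum, ← Finset.mul_sum, ← Finset.mul_sum, hA, hB, hC]
      ring
    rw [hlim]
    have hcongr : ∀ η : ℝ, Υ η = (1 + θ ^ 2 * ((∑ t, (β t) ^ 2 / α t) - 1))
        + ∑ t, (α t * (1 - θ * (1 - γ t)) ^ 2 * (1 - γ t)) * (η / (1 + η * γ t)) := by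
      intro η
      rw [hΥ, Finset.mul_sum]
      congr 1
      refine Finset.sum_congr rfl fun t _ => ?_
      rw [mul_div_assoc]
      ring
    have hterm : ∀ t : Fin T, Tendsto (fun η : ℝ => η / (1 + η * γ t)) atTop (𝓝 (γ t)⁻¹) := by
      intro t
      have h0 : Tendsto (fun η : ℝ => η⁻¹ + γ t) atTop (𝓝 (γ t)) := by
        simpa using tendsto_inv_atTop_zero.add (tendsto_const_nhds (x := γ t))
      have h1 : Tendsto (fun η : ℝ => (η⁻¹ + γ t)⁻¹) atTop (𝓝 (γ t)⁻¹) := h0.inv₀ (hγne t)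
      refine h1.congr' ?_
      filter_upwards [eventually_gt_atTop (0:ℝ)] with η hη
      have hηne : η ≠ 0 := ne_of_gt hη
      have hd : η⁻¹ + γ t = (1 + η * γ t) / η := by field_simp
      rw [hd, ← one_div, one_div_div]
    have key : Tendsto Υ atTop (𝓝 ((1 + θ ^ 2 * ((∑ t, (β t) ^ 2 / α t) - 1))
        + ∑ t, (α t * (1 - θ * (1 - γ t)) ^ 2 * (1 - γ t)) * (γ t)⁻¹)) := by
      refine Tendsto.congr (fun η => (hcongr η).symm) ?_
      exact tendsto_const_nhds.add (tendsto_finset_sum _ fun t _ =>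
        (tendsto_const_nhds.mul (hterm t)))
    have hfix : ∑ t, α t * (1 - θ * (1 - γ t)) ^ 2 * (1 - γ t) / γ t
        = ∑ t, (α t * (1 - θ * (1 - γ t)) ^ 2 * (1 - γ t)) * (γ t)⁻¹ :=
      Finset.sum_congr rfl fun t _ => div_eq_mul_inv _ _
    rw [hfix]
    exact key
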